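/- Riemann-method representation: fix R ∈ ℂ, k > 0, 0 < a₀ < a₁ and b₀ ∈ ℝ. Let u be twice continuously differentiable on an open set containing the closed triangle T = {(a,b) : a₀ ≤ a ≤ a₁, b₀ ≤ b ≤ b₀ + k·(a₁ − a)} and satisfy a·∂²u/(∂a∂b) + R·∂u/∂a = 0 there. Let v(a,b) = exp(R·(b − b₀)/a), and set P = (a₀, b₀ + k·(a₁ − a₀)) and Q = (a₁, b₀) (the intersections of the line b = b₀ + k·(a₁ − a) with the characteristics a = a₀ and b = b₀ through M = (a₀, b₀)). Then u(a₀, b₀) = (1/2)·[(u·v)(P) + (u·v)(Q)] + (1/2)·∫_{a₁}^{a₀} [ (v·∂u/∂a − u·∂v/∂a) + k·( v·∂u/∂b − u·∂v/∂b + (2R/a)·u·v ) ](a, b₀ + k·(a₁ − a)) da. -/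

import Mathlib

open Complex intervalIntegral

/-- The Riemann function `v(a,b) = exp(R·(b − b₀)/a)`. -/
noncomputable def riemannV (R : ℂ) (b₀ : ℝ) (a b : ℝ) : ℂ :=
  Complex.exp (R * ((b : ℂ) - (b₀ : ℂ)) / (a : ℂ))

lemma hasDerivAt_ofReal' (x : ℝ) : HasDerivAt (fun x : ℝ => (x:ℂ)) 1 x :=
  Complex.ofRealCLM.hasDerivAt

lemma riemannV_deriv_b (R : ℂ) (b₀ a b : ℝ) :
    HasDerivAt (fun b' : ℝ => riemannV R b₀ a b') (R / (a:ℂ) * riemannV R b₀ a b) b := by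
  have h1 : HasDerivAt (fun b' : ℝ => R * ((b' : ℂ) - (b₀ : ℂ)) / (a : ℂ)) (R / (a:ℂ)) b := by
    have := (((hasDerivAt_ofReal' b).sub_const (b₀:ℂ)).const_mul R).div_const (a:ℂ)
    simpa using this
  have := h1.cexp
  simpa [riemannV, mul_comm] using this

lemma riemannV_deriv_a (R : ℂ) (b₀ : ℝ) (b : ℝ) (a : ℝ) (ha : a ≠ 0) :
    HasDerivAt (fun a' : ℝ => riemannV R b₀ a' b)
      (-(R * ((b:ℂ) - (b₀:ℂ))) / (a:ℂ)^2 * riemannV R b₀ a b) a := by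
  have hinv : HasDerivAt (fun a' : ℝ => ((a':ℂ))⁻¹) (-1 / (a:ℂ)^2) a := by
    have := (hasDerivAt_inv (show ((a:ℝ):ℂ) ≠ 0 from by exact_mod_cast ha)).comp_ofReal
    simpa [div_eq_mul_inv] using this
  have h1 : HasDerivAt (fun a' : ℝ => R * ((b : ℂ) - (b₀ : ℂ)) * ((a':ℂ))⁻¹)
      (R * ((b : ℂ) - (b₀ : ℂ)) * (-1 / (a:ℂ)^2)) a := hinv.const_mul _
  have h2 := h1.cexp
  have heq : (fun a' : ℝ => riemannV R b₀ a' b)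
      = fun a' : ℝ => Complex.exp (R * ((b : ℂ) - (b₀ : ℂ)) * ((a':ℂ))⁻¹) := by
    funext a'; simp [riemannV, div_eq_mul_inv]
  rw [heq]
  convert h2 using 1
  rw [riemannV, div_eq_mul_inv]
  ring

lemma riemannV_deriv_line (R : ℂ) (k b₀ a₁ : ℝ) (a : ℝ) (ha : a ≠ 0) :
    HasDerivAt (fun a' : ℝ => riemannV R b₀ a' (b₀ + k * (a₁ - a')))
      (-(R * (k:ℂ) * (a₁:ℂ)) / (a:ℂ)^2 * riemannV R b₀ a (b₀ + k * (a₁ - a))) a := by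
  have haC : ((a:ℝ):ℂ) ≠ 0 := by exact_mod_cast ha
  have heq : (fun a' : ℝ => riemannV R b₀ a' (b₀ + k * (a₁ - a')))
      = fun a' : ℝ => Complex.exp ((R * (k:ℂ) * ((a₁:ℂ) - (a':ℂ))) * ((a':ℂ))⁻¹) := by
    funext a'; rw [riemannV]; congr 1; push_cast; ring
  have hinv : HasDerivAt (fun a' : ℝ => ((a':ℂ))⁻¹) (-1 / (a:ℂ)^2) a := by
    have := (hasDerivAt_inv haC).comp_ofReal
    simpa [div_eq_mul_inv] using this
  have hnum : HasDerivAt (fun a' : ℝ => R * (k:ℂ) * ((a₁:ℂ) - (a':ℂ))) (-(R * (k:ℂ))) a := by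
    have := ((hasDerivAt_ofReal' a).const_sub (a₁:ℂ)).const_mul (R * (k:ℂ))
    simpa using this
  have h2 := (hnum.mul hinv).cexp
  rw [heq]
  convert h2 using 1
  · rfl
  simp only [Pi.mul_apply]
  rw [riemannV]
  have harg : R * (((b₀ + k * (a₁ - a) : ℝ):ℂ) - (b₀:ℂ)) / (a:ℂ)
      = R * (k:ℂ) * ((a₁:ℂ) - (a:ℂ)) * ((a:ℂ))⁻¹ := by push_cast; ring
  rw [harg]
  field_simp
  ring

theorem riemann_method_representation (R : ℂ) (k : ℝ) (hk : 0 < k)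
    (a₀ a₁ : ℝ) (ha₀ : 0 < a₀) (ha₀₁ : a₀ < a₁) (b₀ : ℝ)
    (V : Set (ℝ × ℝ)) (hV : IsOpen V)
    (hTV : {p : ℝ × ℝ | a₀ ≤ p.1 ∧ p.1 ≤ a₁ ∧ b₀ ≤ p.2 ∧ p.2 ≤ b₀ + k * (a₁ - p.1)} ⊆ V)
    (u : ℝ → ℝ → ℂ) (hu : ContDiffOn ℝ 2 (fun p : ℝ × ℝ => u p.1 p.2) V)
    (hpde : ∀ p ∈ V,
      (p.1 : ℂ) * deriv (fun b' : ℝ => deriv (fun a' : ℝ => u a' b') p.1) p.2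
        + R * deriv (fun a' : ℝ => u a' p.2) p.1 = 0) :
    u a₀ b₀
      = (1 / 2 : ℂ) * (u a₀ (b₀ + k * (a₁ - a₀)) * riemannV R b₀ a₀ (b₀ + k * (a₁ - a₀))
          + u a₁ b₀ * riemannV R b₀ a₁ b₀)
        + (1 / 2 : ℂ) * ∫ a in a₁..a₀,
            ((riemannV R b₀ a (b₀ + k * (a₁ - a)) *
                  deriv (fun a' : ℝ => u a' (b₀ + k * (a₁ - a))) a
                - u a (b₀ + k * (a₁ - a)) *
                  deriv (fun a' : ℝ => riemannV R b₀ a' (b₀ + k * (a₁ - a))) a)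
              + (k : ℂ) *
                (riemannV R b₀ a (b₀ + k * (a₁ - a)) *
                    deriv (fun b' : ℝ => u a b') (b₀ + k * (a₁ - a))
                  - u a (b₀ + k * (a₁ - a)) *
                    deriv (fun b' : ℝ => riemannV R b₀ a b') (b₀ + k * (a₁ - a))
                  + (2 * R / (a : ℂ)) * u a (b₀ + k * (a₁ - a)) *
                    riemannV R b₀ a (b₀ + k * (a₁ - a)))) := by
  have hs : Set.uIcc a₁ a₀ = Set.Icc a₀ a₁ := by
    rw [Set.uIcc_comm, Set.uIcc_of_le ha₀₁.le]
  set f : ℝ × ℝ → ℂ := fun p => u p.1 p.2 with hfdef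
  set F : ℝ × ℝ → (ℝ × ℝ) →L[ℝ] ℂ := fun p => fderiv ℝ f p with hFdef
  set ua : ℝ × ℝ → ℂ := fun p => F p (1, 0) with huadef
  set ub : ℝ × ℝ → ℂ := fun p => F p (0, 1) with hubdef
  set uab : ℝ × ℝ → ℂ := fun p => fderiv ℝ ua p (0, 1) with huabdef
  have hfd : ∀ p ∈ V, HasFDerivAt f (F p) p := fun p hp =>
    ((hu.differentiableOn (by norm_num)).differentiableAt (hV.mem_nhds hp)).hasFDerivAt
  have hA : ∀ x y : ℝ, (x, y) ∈ V → HasDerivAt (fun a' : ℝ => u a' y) (ua (x, y)) x := by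
    intro x y hp
    have hl : HasDerivAt (fun a' : ℝ => ((a', y) : ℝ × ℝ)) ((1:ℝ), (0:ℝ)) x :=
      HasDerivAt.prodMk (hasDerivAt_id x) (hasDerivAt_const x y)
    exact (hfd (x, y) hp).comp_hasDerivAt x hl
  have hB : ∀ x y : ℝ, (x, y) ∈ V → HasDerivAt (fun b' : ℝ => u x b') (ub (x, y)) y := by
    intro x y hp
    have hl : HasDerivAt (fun b' : ℝ => ((x, b') : ℝ × ℝ)) ((0:ℝ), (1:ℝ)) y :=
      HasDerivAt.prodMk (hasDerivAt_const y x) (hasDerivAt_id y)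
    exact (hfd (x, y) hp).comp_hasDerivAt y hl
  have hF1 : ContDiffOn ℝ 1 F V := hu.fderiv_of_isOpen hV (by norm_num)
  have hua1 : ContDiffOn ℝ 1 ua V := hF1.clm_apply contDiffOn_const
  have hub1 : ContDiffOn ℝ 1 ub V := hF1.clm_apply contDiffOn_const
  have hAB : ∀ x y : ℝ, (x, y) ∈ V → HasDerivAt (fun b' : ℝ => ua (x, b')) (uab (x, y)) y := by
    intro x y hp
    have hd : HasFDerivAt ua (fderiv ℝ ua (x, y)) (x, y) :=
      ((hua1.differentiableOn one_ne_zero).differentiableAt (hV.mem_nhds hp)).hasFDerivAt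
    have hl : HasDerivAt (fun b' : ℝ => ((x, b') : ℝ × ℝ)) ((0:ℝ), (1:ℝ)) y :=
      HasDerivAt.prodMk (hasDerivAt_const y x) (hasDerivAt_id y)
    exact hd.comp_hasDerivAt y hl
  have hpde' : ∀ x y : ℝ, (x, y) ∈ V → (x : ℂ) * uab (x, y) + R * ua (x, y) = 0 := by
    intro x y hp
    have h1 : deriv (fun a' : ℝ => u a' y) x = ua (x, y) := (hA x y hp).deriv
    have hopen : IsOpen {b' : ℝ | (x, b') ∈ V} := hV.preimage (Continuous.prodMk_right x)
    have hev : (fun b' : ℝ => deriv (fun a' : ℝ => u a' b') x) =ᶠ[nhds y]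
        (fun b' : ℝ => ua (x, b')) := by
      filter_upwards [hopen.mem_nhds (show (x, y) ∈ V from hp)] with b' hb'
      exact (hA x b' hb').deriv
    have h2 : deriv (fun b' : ℝ => deriv (fun a' : ℝ => u a' b') x) y = uab (x, y) := by
      rw [hev.deriv_eq, (hAB x y hp).deriv]
    have h3 := hpde (x, y) hp
    simp only at h3
    rw [h1, h2] at h3
    exact h3
  have hmemT : ∀ a b : ℝ, a₀ ≤ a → a ≤ a₁ → b₀ ≤ b → b ≤ b₀ + k * (a₁ - a) →
      ((a, b) : ℝ × ℝ) ∈ V := fun a b h1 h2 h3 h4 => hTV ⟨h1, h2, h3, h4⟩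
  have hβnn : ∀ a : ℝ, a ≤ a₁ → b₀ ≤ b₀ + k * (a₁ - a) := by
    intro a h; nlinarith
  have hγmem : ∀ a : ℝ, a₀ ≤ a → a ≤ a₁ → ((a, b₀ + k * (a₁ - a)) : ℝ × ℝ) ∈ V :=
    fun a h1 h2 => hmemT a _ h1 h2 (hβnn a h2) le_rfl
  have hbmem : ∀ a : ℝ, a₀ ≤ a → a ≤ a₁ → ((a, b₀) : ℝ × ℝ) ∈ V :=
    fun a h1 h2 => hmemT a b₀ h1 h2 le_rfl (hβnn a h2)
  -- Step D : v·u_a is independent of b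
  have hconst : ∀ a b : ℝ, a₀ ≤ a → a ≤ a₁ → b₀ ≤ b → b ≤ b₀ + k * (a₁ - a) →
      riemannV R b₀ a b * ua (a, b) = ua (a, b₀) := by
    intro a b h1 h2 h3 h4
    have haC : ((a:ℝ):ℂ) ≠ 0 := by exact_mod_cast (ha₀.trans_le h1).ne'
    have hder : ∀ y ∈ Set.uIcc b₀ b,
        HasDerivAt (fun y' : ℝ => riemannV R b₀ a y' * ua (a, y')) ((fun _ => (0:ℂ)) y) y := by
      intro y hy
      rw [Set.uIcc_of_le h3] at hy
      have hm : ((a, y) : ℝ × ℝ) ∈ V := hmemT a y h1 h2 hy.1 (hy.2.trans h4)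
      have hd := (riemannV_deriv_b R b₀ a y).mul (hAB a y hm)
      refine hd.congr_deriv ?_
      symm
      have hp := hpde' a y hm
      field_simp
      linear_combination (-riemannV R b₀ a y) * hp
    have h0 := intervalIntegral.integral_eq_sub_of_hasDerivAt hder intervalIntegrable_const
    have h5 : riemannV R b₀ a b₀ = 1 := by simp [riemannV]
    simp only [intervalIntegral.integral_const, smul_zero, h5, one_mul] at h0
    linear_combination -h0
  -- the boundary function h along the slanted line and its derivative H
  set h : ℝ → ℂ := fun a => u a (b₀ + k * (a₁ - a)) * riemannV R b₀ a (b₀ + k * (a₁ - a)) with hhdef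
  set H : ℝ → ℂ := fun a =>
      (ua (a, b₀ + k * (a₁ - a)) - (k:ℂ) * ub (a, b₀ + k * (a₁ - a))) *
          riemannV R b₀ a (b₀ + k * (a₁ - a))
        + u a (b₀ + k * (a₁ - a)) *
          (-(R * (k:ℂ) * (a₁:ℂ)) / (a:ℂ)^2 * riemannV R b₀ a (b₀ + k * (a₁ - a))) with hHdef
  have hhd : ∀ a ∈ Set.uIcc a₁ a₀, HasDerivAt h (H a) a := by
    intro a ha'
    rw [hs] at ha'
    obtain ⟨h1, h2⟩ := ha'
    have hm := hγmem a h1 h2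
    have haR : a ≠ 0 := (ha₀.trans_le h1).ne'
    have hl : HasDerivAt (fun a' : ℝ => ((a', b₀ + k * (a₁ - a')) : ℝ × ℝ)) ((1:ℝ), -k) a := by
      refine HasDerivAt.prodMk (hasDerivAt_id a) ?_
      have := (((hasDerivAt_id a).const_sub a₁).const_mul k).const_add b₀
      simpa using this
    have hu1 : HasDerivAt (fun a' : ℝ => u a' (b₀ + k * (a₁ - a')))
        (ua (a, b₀ + k * (a₁ - a)) - (k:ℂ) * ub (a, b₀ + k * (a₁ - a))) a := by
      have hc := (hfd _ hm).comp_hasDerivAt a hl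
      have he : ((1:ℝ), (-k:ℝ)) = ((1:ℝ), (0:ℝ)) + (-k) • ((0:ℝ), (1:ℝ)) := by simp
      rw [he, map_add, map_smul] at hc
      simp only [huadef, hubdef] at *
      refine hc.congr_deriv ?_
      rw [Complex.real_smul]
      push_cast
      ring
    exact hu1.mul (riemannV_deriv_line R k b₀ a₁ a haR)
  -- continuity facts
  have hucont : ContinuousOn f V := hu.continuousOn
  have huacont : ContinuousOn ua V := hua1.continuousOn
  have hubcont : ContinuousOn ub V := hub1.continuousOn
  have hγc : ContinuousOn (fun a : ℝ => ((a, b₀ + k * (a₁ - a)) : ℝ × ℝ)) (Set.uIcc a₁ a₀) := by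
    fun_prop
  have hγmaps : Set.MapsTo (fun a : ℝ => ((a, b₀ + k * (a₁ - a)) : ℝ × ℝ))
      (Set.uIcc a₁ a₀) V := by
    intro a ha'
    rw [hs] at ha'
    exact hγmem a ha'.1 ha'.2
  have hvc : ContinuousOn (fun a : ℝ => riemannV R b₀ a (b₀ + k * (a₁ - a)))
      (Set.uIcc a₁ a₀) := by
    simp only [riemannV]
    apply Continuous.comp_continuousOn Complex.continuous_exp
    apply ContinuousOn.div
    · fun_prop
    · fun_prop
    · intro x hx
      rw [hs] at hx
      exact_mod_cast (ha₀.trans_le hx.1).ne'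
  have hHcont : ContinuousOn H (Set.uIcc a₁ a₀) := by
    apply ContinuousOn.add
    · exact ((huacont.comp hγc hγmaps).sub
        ((hubcont.comp hγc hγmaps).const_smul (k:ℂ))).mul hvc
    · refine (hucont.comp hγc hγmaps).mul (ContinuousOn.mul ?_ hvc)
      apply ContinuousOn.div continuousOn_const
      · fun_prop
      · intro x hx
        rw [hs] at hx
        have : ((x:ℝ):ℂ) ≠ 0 := by exact_mod_cast (ha₀.trans_le hx.1).ne'
        exact pow_ne_zero 2 this
  have hint_H : IntervalIntegrable H MeasureTheory.volume a₁ a₀ := hHcont.intervalIntegrable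
  have hFTC2 : ∫ a in a₁..a₀, H a = h a₀ - h a₁ :=
    intervalIntegral.integral_eq_sub_of_hasDerivAt hhd hint_H
  -- FTC along b = b₀
  have hub0d : ∀ a ∈ Set.uIcc a₁ a₀, HasDerivAt (fun a' : ℝ => u a' b₀) (ua (a, b₀)) a := by
    intro a ha'
    rw [hs] at ha'
    exact hA a b₀ (hbmem a ha'.1 ha'.2)
  have hlinec : ContinuousOn (fun a : ℝ => ((a, b₀) : ℝ × ℝ)) (Set.uIcc a₁ a₀) := by fun_prop
  have hlinemaps : Set.MapsTo (fun a : ℝ => ((a, b₀) : ℝ × ℝ)) (Set.uIcc a₁ a₀) V := by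
    intro a ha'
    rw [hs] at ha'
    exact hbmem a ha'.1 ha'.2
  have hint_b0 : IntervalIntegrable (fun a : ℝ => ua (a, b₀)) MeasureTheory.volume a₁ a₀ :=
    (huacont.comp hlinec hlinemaps).intervalIntegrable
  have hFTC1 : ∫ a in a₁..a₀, ua (a, b₀) = u a₀ b₀ - u a₁ b₀ :=
    intervalIntegral.integral_eq_sub_of_hasDerivAt hub0d hint_b0
  -- pointwise identity for the integrand
  have key : Set.EqOn (fun a : ℝ =>
      ((riemannV R b₀ a (b₀ + k * (a₁ - a)) *
            deriv (fun a' : ℝ => u a' (b₀ + k * (a₁ - a))) a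
          - u a (b₀ + k * (a₁ - a)) *
            deriv (fun a' : ℝ => riemannV R b₀ a' (b₀ + k * (a₁ - a))) a)
        + (k : ℂ) *
          (riemannV R b₀ a (b₀ + k * (a₁ - a)) *
              deriv (fun b' : ℝ => u a b') (b₀ + k * (a₁ - a))
            - u a (b₀ + k * (a₁ - a)) *
              deriv (fun b' : ℝ => riemannV R b₀ a b') (b₀ + k * (a₁ - a))
            + (2 * R / (a : ℂ)) * u a (b₀ + k * (a₁ - a)) *
              riemannV R b₀ a (b₀ + k * (a₁ - a)))))
      (fun a : ℝ => 2 * ua (a, b₀) - H a) (Set.uIcc a₁ a₀) := by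
    intro a ha'
    rw [hs] at ha'
    obtain ⟨h1, h2⟩ := ha'
    have hm := hγmem a h1 h2
    have haR : a ≠ 0 := (ha₀.trans_le h1).ne'
    have haC : ((a:ℝ):ℂ) ≠ 0 := by exact_mod_cast haR
    have hc := hconst a (b₀ + k * (a₁ - a)) h1 h2 (hβnn a h2) le_rfl
    simp only [hHdef]
    rw [(hA a (b₀ + k * (a₁ - a)) hm).deriv, (hB a (b₀ + k * (a₁ - a)) hm).deriv,
      (riemannV_deriv_a R b₀ (b₀ + k * (a₁ - a)) a haR).deriv,
      (riemannV_deriv_b R b₀ a (b₀ + k * (a₁ - a))).deriv, ← hc]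
    have hcast : ((b₀ + k * (a₁ - a) : ℝ) : ℂ) - (b₀ : ℂ) = (k:ℂ) * ((a₁:ℂ) - (a:ℂ)) := by
      push_cast; ring
    rw [hcast]
    field_simp
    ring
  rw [intervalIntegral.integral_congr key]
  have hsplit : (∫ a in a₁..a₀, (2 * ua (a, b₀) - H a))
      = 2 * (u a₀ b₀ - u a₁ b₀) - (h a₀ - h a₁) := by
    rw [intervalIntegral.integral_sub (hint_b0.const_mul 2) hint_H,
      intervalIntegral.integral_const_mul, hFTC1, hFTC2]
  rw [hsplit]
  have hQ : h a₁ = u a₁ b₀ * riemannV R b₀ a₁ b₀ := by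
    simp only [hhdef, sub_self, mul_zero, add_zero]
  have hP : h a₀ = u a₀ (b₀ + k * (a₁ - a₀)) * riemannV R b₀ a₀ (b₀ + k * (a₁ - a₀)) := rfl
  have hv1 : riemannV R b₀ a₁ b₀ = 1 := by simp [riemannV]
  rw [← hP, hQ, hv1]
  ring
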